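/- For every integer k > 1, (1/φ(k)) · Σ_{j=1}^{k} (log Γ(j/k)) · c_k(j) = (1/2) · Σ_{p | k, p prime} (log p)/(p − 1) − (log 2π)/2, where Γ is the Gamma function. -/

import Mathlib

open Finset ArithmeticFunction
open scoped ArithmeticFunction.Moebius ArithmeticFunction.zeta

/-- The Ramanujan sum `c_k(j) = ∑_{1 ≤ m ≤ k, gcd(m,k)=1} exp(2πimj/k)`. -/
noncomputable def ramanujanSum (k : ℕ) (j : ℤ) : ℂ :=
  ∑ m ∈ (Finset.Icc 1 k).filter (fun m => Nat.gcd m k = 1),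
    Complex.exp (2 * (Real.pi : ℂ) * Complex.I * (m : ℂ) * (j : ℂ) / (k : ℂ))

lemma sumExp (q : ℕ) (hq : 0 < q) (j : ℤ) :
    ∑ i ∈ Finset.Icc 1 q, Complex.exp (2 * (Real.pi : ℂ) * Complex.I * (i : ℂ) * (j : ℂ) / (q : ℂ))
      = if (q : ℤ) ∣ j then (q : ℂ) else 0 := by
  have hq0 : (q : ℂ) ≠ 0 := Nat.cast_ne_zero.mpr hq.ne'
  have hpi : (Real.pi : ℂ) ≠ 0 := Complex.ofReal_ne_zero.mpr Real.pi_ne_zero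
  have h2pi : 2 * (Real.pi : ℂ) * Complex.I ≠ 0 := by
    simp [hpi, Complex.I_ne_zero]
  set w : ℂ := Complex.exp (2 * (Real.pi : ℂ) * Complex.I * (j : ℂ) / (q : ℂ)) with hw
  have hterm : ∀ i : ℕ, Complex.exp (2 * (Real.pi : ℂ) * Complex.I * (i : ℂ) * (j : ℂ) / (q : ℂ)) = w ^ i := by
    intro i
    rw [hw, ← Complex.exp_nat_mul]
    ring_nf
  have hicc : ∑ i ∈ Finset.Icc 1 q, w ^ i = ∑ i ∈ Finset.range q, w ^ (1 + i) := by
    rw [← Finset.Ico_add_one_right_eq_Icc, Finset.sum_Ico_eq_sum_range]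
    simp
  simp only [hterm]
  by_cases hdvd : (q : ℤ) ∣ j
  · obtain ⟨n, hn⟩ := id hdvd
    have hw1 : w = 1 := by
      rw [hw, hn]
      push_cast
      rw [show 2 * (Real.pi : ℂ) * Complex.I * ((q : ℂ) * (n : ℂ)) / (q : ℂ)
          = (n : ℂ) * (2 * (Real.pi : ℂ) * Complex.I) by field_simp]
      exact Complex.exp_int_mul_two_pi_mul_I n
    rw [if_pos hdvd]
    simp [hw1, Nat.card_Icc]
  · have hw1 : w ≠ 1 := by
      intro h
      rw [hw, Complex.exp_eq_one_iff] at h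
      obtain ⟨n, hn⟩ := h
      apply hdvd
      refine ⟨n, ?_⟩
      have hc : (j : ℂ) = (q : ℂ) * (n : ℂ) := by
        field_simp at hn
        apply mul_left_cancel₀ h2pi
        linear_combination (2 * (Real.pi : ℂ) * Complex.I) * hn
      exact_mod_cast hc
    have hwq : w ^ q = 1 := by
      rw [hw, ← Complex.exp_nat_mul]
      rw [show (q : ℂ) * (2 * (Real.pi : ℂ) * Complex.I * (j : ℂ) / (q : ℂ))
          = (j : ℂ) * (2 * (Real.pi : ℂ) * Complex.I) by field_simp]
      exact Complex.exp_int_mul_two_pi_mul_I j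
    rw [hicc]
    simp only [pow_add, pow_one]
    rw [← Finset.mul_sum, geom_sum_eq hw1, hwq]
    simp [hdvd]
lemma moebius_sum_eq (n : ℕ) :
    (∑ t ∈ n.divisors, (μ t : ℂ)) = if n = 1 then 1 else 0 := by
  have h : ((μ : ArithmeticFunction ℂ) * ζ) n = (1 : ArithmeticFunction ℂ) n := by
    rw [coe_moebius_mul_coe_zeta]
  rw [coe_mul_zeta_apply] at h
  simpa [one_apply] using h
lemma ramanujanSum_eq (k : ℕ) (hk : 0 < k) (j : ℤ) :
    ramanujanSum k j = ∑ t ∈ k.divisors,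
      (μ t : ℂ) * (if ((k / t : ℕ) : ℤ) ∣ j then ((k / t : ℕ) : ℂ) else 0) := by
  set f : ℕ → ℂ := fun m => Complex.exp (2 * (Real.pi : ℂ) * Complex.I * (m : ℂ) * (j : ℂ) / (k : ℂ)) with hf
  have step1 : ramanujanSum k j
      = ∑ m ∈ Finset.Icc 1 k, (∑ t ∈ (Nat.gcd m k).divisors, (μ t : ℂ)) * f m := by
    rw [ramanujanSum, Finset.sum_filter]
    refine Finset.sum_congr rfl fun m hm => ?_
    rw [moebius_sum_eq]
    split <;> simp [hf]
  have step2 : ∀ m ∈ Finset.Icc 1 k, (Nat.gcd m k).divisors = k.divisors.filter (· ∣ m) := by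
    intro m hm
    ext t
    simp only [Nat.mem_divisors, Finset.mem_filter, Nat.dvd_gcd_iff]
    constructor
    · rintro ⟨⟨h1, h2⟩, -⟩
      exact ⟨⟨h2, hk.ne'⟩, h1⟩
    · rintro ⟨⟨h2, -⟩, h1⟩
      exact ⟨⟨h1, h2⟩, Nat.gcd_ne_zero_right hk.ne'⟩
  rw [step1, Finset.sum_congr rfl (fun m hm => by rw [step2 m hm, Finset.sum_filter])]
  simp only [Finset.sum_mul]
  rw [Finset.sum_comm]
  refine Finset.sum_congr rfl fun t ht => ?_
  obtain ⟨htk, hk0⟩ := Nat.mem_divisors.mp ht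
  have ht0 : 0 < t := Nat.pos_of_mem_divisors ht
  set q := k / t with hq
  have hq0 : 0 < q := Nat.div_pos (Nat.le_of_dvd hk htk) ht0
  have hkq : k = t * q := (Nat.mul_div_cancel' htk).symm
  have key : ∑ m ∈ Finset.Icc 1 k, (if t ∣ m then (μ t : ℂ) else 0) * f m
      = ∑ i ∈ Finset.Icc 1 q, (μ t : ℂ) * f (t * i) := by
    simp only [ite_mul, zero_mul]
    rw [← Finset.sum_filter]
    refine Finset.sum_nbij' (fun m => m / t) (fun i => t * i) ?_ ?_ ?_ ?_ ?_
    · intro m hm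
      simp only [Finset.mem_filter, Finset.mem_Icc] at hm
      obtain ⟨⟨h1, h2⟩, hdv⟩ := hm
      simp only [Finset.mem_Icc]
      constructor
      · exact Nat.one_le_div_iff ht0 |>.mpr (Nat.le_of_dvd (by omega) hdv)
      · exact Nat.div_le_div_right h2
    · intro i hi
      simp only [Finset.mem_Icc] at hi
      simp only [Finset.mem_filter, Finset.mem_Icc]
      refine ⟨⟨Nat.one_le_iff_ne_zero.mpr (Nat.mul_ne_zero ht0.ne' (by omega)), ?_⟩, Dvd.intro i rfl⟩
      calc t * i ≤ t * q := Nat.mul_le_mul_left t hi.2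
        _ = k := hkq.symm
    · intro m hm
      simp only [Finset.mem_filter] at hm
      exact Nat.mul_div_cancel' hm.2
    · intro i hi
      exact Nat.mul_div_cancel_left i ht0
    · intro m hm
      simp only [Finset.mem_filter] at hm
      rw [Nat.mul_div_cancel' hm.2]
  have hfi : ∀ i : ℕ, f (t * i) = Complex.exp (2 * (Real.pi : ℂ) * Complex.I * (i : ℂ) * (j : ℂ) / (q : ℂ)) := by
    intro i
    simp only [hf]
    congr 1
    have ht0' : (t : ℂ) ≠ 0 := Nat.cast_ne_zero.mpr ht0.ne'
    have hq0' : (q : ℂ) ≠ 0 := Nat.cast_ne_zero.mpr hq0.ne'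
    rw [hkq]
    push_cast
    field_simp
  rw [key, ← Finset.mul_sum, Finset.sum_congr rfl fun i _ => hfi i, sumExp q hq0 j]
lemma abs_one_sub_exp (x : ℝ) :
    ‖1 - Complex.exp ((x : ℂ) * Complex.I)‖ = 2 * |Real.sin (x / 2)| := by
  have hab : Complex.exp (-((x/2:ℝ):ℂ) * Complex.I) * Complex.exp (((x/2:ℝ):ℂ) * Complex.I) = 1 := by
    rw [← Complex.exp_add]
    norm_num
  have hbb : Complex.exp (((x/2:ℝ):ℂ) * Complex.I) * Complex.exp (((x/2:ℝ):ℂ) * Complex.I)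
      = Complex.exp ((x:ℂ) * Complex.I) := by
    rw [← Complex.exp_add]
    congr 1
    push_cast
    ring
  have key : 1 - Complex.exp ((x : ℂ) * Complex.I)
      = -2 * Complex.I * Complex.sin ((x / 2 : ℝ) : ℂ) * Complex.exp (((x / 2 : ℝ) : ℂ) * Complex.I) := by
    rw [Complex.sin]
    set a := Complex.exp (-((x/2:ℝ):ℂ) * Complex.I) with ha
    set b := Complex.exp (((x/2:ℝ):ℂ) * Complex.I) with hb
    linear_combination -hab + hbb + (a * b - b ^ 2) * Complex.I_sq
  rw [key]
  simp only [norm_mul, Complex.norm_I, Complex.norm_exp_ofReal_mul_I, ← Complex.ofReal_sin,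
    Complex.norm_real, Real.norm_eq_abs, Complex.norm_two, norm_neg, neg_mul]
  norm_num
lemma prod_sin (q : ℕ) (hq : 0 < q) :
    ∏ i ∈ Finset.Icc 1 (q - 1), (2 * Real.sin (Real.pi * i / q)) = q := by
  obtain ⟨n, rfl⟩ : ∃ n, q = n + 1 := ⟨q - 1, by omega⟩
  have hprim : IsPrimitiveRoot (Complex.exp (2 * (Real.pi:ℂ) * Complex.I / (n+1 : ℕ)))
      (n + 1) := Complex.isPrimitiveRoot_exp (n+1) (by omega)
  have hprod := hprim.prod_one_sub_pow_eq_order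
  have habs := congrArg (‖·‖) hprod
  rw [norm_prod] at habs
  have hterm : ∀ k ∈ Finset.range n,
      ‖1 - Complex.exp (2 * (Real.pi:ℂ) * Complex.I / (n+1:ℕ)) ^ (k+1)‖
        = 2 * Real.sin (Real.pi * (k+1) / (n+1)) := by
    intro k hk
    have hk' : k + 1 ≤ n := by simpa using Finset.mem_range.mp hk
    have hexp : Complex.exp (2 * (Real.pi:ℂ) * Complex.I / (n+1:ℕ)) ^ (k+1)
        = Complex.exp (((2 * Real.pi * (k+1) / (n+1) : ℝ) : ℂ) * Complex.I) := by
      rw [← Complex.exp_nat_mul]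
      congr 1
      have h0 : ((n:ℂ) + 1) ≠ 0 := Nat.cast_add_one_ne_zero n
      push_cast
      field_simp
    rw [hexp, abs_one_sub_exp]
    have harg : 2 * Real.pi * (k+1) / (n+1) / 2 = Real.pi * (k+1) / (n+1) := by ring
    rw [harg, abs_of_pos]
    apply Real.sin_pos_of_pos_of_lt_pi
    · positivity
    · rw [div_lt_iff₀ (by positivity)]
      have : ((k:ℝ)+1) < (n+1 : ℝ) := by exact_mod_cast Nat.lt_succ_of_le hk'
      nlinarith [Real.pi_pos]
  rw [Finset.prod_congr rfl hterm] at habs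
  have hrhs : ‖(n : ℂ) + 1‖ = (n : ℝ) + 1 := by
    rw [show ((n:ℂ)+1) = ((n+1 : ℕ) : ℂ) by push_cast; ring]
    rw [Complex.norm_natCast]
    push_cast; ring
  rw [hrhs] at habs
  push_cast
  rw [← Finset.Ico_add_one_right_eq_Icc, Finset.prod_Ico_eq_prod_range]
  rw [Finset.prod_congr rfl (fun k (_ : k ∈ Finset.range (n+1-1)) => show
      2 * Real.sin (Real.pi * (↑(1 + k) : ℝ) / ((n:ℝ) + 1)) = 2 * Real.sin (Real.pi * ((k:ℝ)+1) / ((n:ℝ)+1)) from by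
    congr 2
    push_cast
    ring)]
  simpa using habs
lemma gammaSum (q : ℕ) (hq : 0 < q) :
    ∑ i ∈ Finset.Icc 1 q, Real.log (Real.Gamma ((i : ℝ) / q))
      = (((q : ℝ) - 1) * Real.log (2 * Real.pi) - Real.log q) / 2 := by
  obtain ⟨n, rfl⟩ : ∃ n, q = n + 1 := ⟨q - 1, by omega⟩
  have hN : ((n : ℝ) + 1) ≠ 0 := by positivity
  have hcast : ((n + 1 : ℕ) : ℝ) = (n : ℝ) + 1 := by push_cast; ring
  -- the top term vanishes
  rw [← Finset.Ico_add_one_right_eq_Icc, Finset.sum_Ico_succ_top (by omega), Finset.Ico_add_one_right_eq_Icc]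
  have htop : Real.log (Real.Gamma (((n + 1 : ℕ) : ℝ) / ((n + 1 : ℕ) : ℝ))) = 0 := by
    rw [div_self (by rw [hcast]; positivity), Real.Gamma_one, Real.log_one]
  rw [htop, add_zero]
  set S := ∑ i ∈ Finset.Icc 1 n, Real.log (Real.Gamma ((i : ℝ) / ((n + 1 : ℕ) : ℝ))) with hS
  -- positivity facts for 1 ≤ i ≤ n
  have hx : ∀ i ∈ Finset.Icc 1 n, 0 < (i : ℝ) / ((n : ℝ) + 1) ∧ (i : ℝ) / ((n : ℝ) + 1) < 1 := by
    intro i hi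
    simp only [Finset.mem_Icc] at hi
    constructor
    · apply div_pos (by exact_mod_cast hi.1) (by positivity)
    · rw [div_lt_one (by positivity)]
      have : (i : ℝ) ≤ n := by exact_mod_cast hi.2
      linarith
  -- reflection for the second copy of S
  have hS2 : S = ∑ i ∈ Finset.Icc 1 n, Real.log (Real.Gamma (1 - (i : ℝ) / ((n : ℝ) + 1))) := by
    rw [hS]
    refine Finset.sum_nbij' (fun i => n + 1 - i) (fun i => n + 1 - i) ?_ ?_ ?_ ?_ ?_
    · intro a ha; simp only [Finset.mem_Icc] at *; omega
    · intro a ha; simp only [Finset.mem_Icc] at *; omega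
    · intro a ha; simp only [Finset.mem_Icc] at ha; omega
    · intro a ha; simp only [Finset.mem_Icc] at ha; omega
    · intro a ha
      simp only [Finset.mem_Icc] at ha
      congr 1
      rw [hcast, Nat.cast_sub (by omega)]
      push_cast
      field_simp
      ring_nf
  have h2S : 2 * S = ∑ i ∈ Finset.Icc 1 n,
      (Real.log Real.pi - Real.log (Real.sin (Real.pi * i / ((n : ℝ) + 1)))) := by
    have : 2 * S = S + S := by ring
    rw [this]
    nth_rewrite 2 [hS2]
    rw [hS, ← Finset.sum_add_distrib]
    refine Finset.sum_congr rfl fun i hi => ?_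
    obtain ⟨hx0, hx1⟩ := hx i hi
    have hg1 : 0 < Real.Gamma ((i : ℝ) / ((n : ℝ) + 1)) := Real.Gamma_pos_of_pos hx0
    have hg2 : 0 < Real.Gamma (1 - (i : ℝ) / ((n : ℝ) + 1)) := Real.Gamma_pos_of_pos (by linarith)
    have hsin : 0 < Real.sin (Real.pi * ((i : ℝ) / ((n : ℝ) + 1))) := by
      apply Real.sin_pos_of_pos_of_lt_pi
      · have := Real.pi_pos; nlinarith
      · have := Real.pi_pos; nlinarith
    rw [hcast, ← Real.log_mul hg1.ne' hg2.ne', Real.Gamma_mul_Gamma_one_sub,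
      Real.log_div Real.pi_ne_zero hsin.ne']
    congr 2
    ring
  -- sine sum
  have hsinsum : ∑ i ∈ Finset.Icc 1 n, Real.log (Real.sin (Real.pi * i / ((n : ℝ) + 1)))
      = Real.log ((n : ℝ) + 1) - n * Real.log 2 := by
    have hp := prod_sin (n + 1) (by omega)
    simp only [Nat.add_sub_cancel, hcast] at hp
    have hlog := congrArg Real.log hp
    rw [Real.log_prod] at hlog
    · have : ∀ i ∈ Finset.Icc 1 n, Real.log (2 * Real.sin (Real.pi * i / ((n : ℝ) + 1)))
          = Real.log 2 + Real.log (Real.sin (Real.pi * i / ((n : ℝ) + 1))) := by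
        intro i hi
        obtain ⟨hx0, hx1⟩ := hx i hi
        have hsin : 0 < Real.sin (Real.pi * i / ((n : ℝ) + 1)) := by
          apply Real.sin_pos_of_pos_of_lt_pi
          · have := Real.pi_pos; rw [mul_div_assoc]; positivity
          · have := Real.pi_pos; rw [mul_div_assoc]; nlinarith
        exact Real.log_mul two_ne_zero hsin.ne'
      rw [Finset.sum_congr rfl this, Finset.sum_add_distrib, Finset.sum_const, Nat.card_Icc] at hlog
      simp only [Nat.add_sub_cancel, nsmul_eq_mul] at hlog
      linarith [hlog]
    · intro i hi
      obtain ⟨hx0, hx1⟩ := hx i hi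
      have hsin : 0 < Real.sin (Real.pi * i / ((n : ℝ) + 1)) := by
        apply Real.sin_pos_of_pos_of_lt_pi
        · have := Real.pi_pos; rw [mul_div_assoc]; positivity
        · have := Real.pi_pos; rw [mul_div_assoc]; nlinarith
      positivity
  have hcard : (Finset.Icc 1 n).card = n := by rw [Nat.card_Icc]; omega
  rw [Finset.sum_sub_distrib, Finset.sum_const, hcard, hsinsum, nsmul_eq_mul] at h2S
  have hlog2pi : Real.log (2 * Real.pi) = Real.log 2 + Real.log Real.pi :=
    Real.log_mul two_ne_zero Real.pi_ne_zero
  rw [hcast]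
  push_cast
  rw [hlog2pi]
  linarith [h2S]
lemma moebius_div_sum (k : ℕ) (hk : 0 < k) :
    ∑ t ∈ k.divisors, (μ t : ℝ) * ((k / t : ℕ) : ℝ) = (Nat.totient k : ℝ) := by
  have h := (sum_eq_iff_sum_smul_moebius_eq (R := ℝ)
    (f := fun n => (Nat.totient n : ℝ)) (g := fun n => (n : ℝ))).mp ?_ k hk
  · simp only [zsmul_eq_mul] at h
    rw [← Nat.sum_divisorsAntidiagonal (fun x y => (μ x : ℝ) * (y : ℝ))]
    rw [← h]
  · intro n hn
    exact_mod_cast congrArg (fun m : ℕ => (m : ℝ)) (Nat.sum_totient n)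
lemma moebius_sum_zero (k : ℕ) (hk : 1 < k) :
    ∑ t ∈ k.divisors, (μ t : ℝ) = 0 := by
  have h : ((μ : ArithmeticFunction ℝ) * ζ) k = (1 : ArithmeticFunction ℝ) k := by
    rw [coe_moebius_mul_coe_zeta]
  rw [coe_mul_zeta_apply] at h
  simpa [one_apply, hk.ne'] using h
lemma inner_sum_eq (k p : ℕ) (hk : 0 < k) (hp : p ∈ k.primeFactors) :
    ∑ t ∈ k.divisors, (if p ∣ t then (μ t : ℝ) * ((k / t : ℕ) : ℝ) else 0)
      = -(Nat.totient k : ℝ) / ((p : ℝ) - 1) := by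
  obtain ⟨hpp, hpk, hk0⟩ := Nat.mem_primeFactors.mp hp
  set v := k.factorization p with hv
  have hv1 : 1 ≤ v := (Nat.Prime.factorization_pos_of_dvd hpp hk0 hpk)
  set m := k / p ^ v with hm
  have hkm : p ^ v * m = k := Nat.ordProj_mul_ordCompl_eq_self k p
  have hm0 : 0 < m := Nat.ordCompl_pos p hk0
  have hcop : Nat.Coprime p m := Nat.coprime_ordCompl hpp hk0
  have hpm : ¬ p ∣ m := (Nat.Prime.coprime_iff_not_dvd hpp).mp hcop
  -- totient factorization
  have htot : Nat.totient k = p ^ (v - 1) * (p - 1) * Nat.totient m := by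
    rw [← hkm, Nat.totient_mul (Nat.Coprime.pow_left v hcop),
      Nat.totient_prime_pow hpp (by omega)]
  -- subset identity
  have hsets : k.divisors.filter (fun t => ¬ p ∣ t) = m.divisors := by
    ext t
    simp only [Finset.mem_filter, Nat.mem_divisors]
    constructor
    · rintro ⟨⟨htk, -⟩, hpt⟩
      refine ⟨?_, hm0.ne'⟩
      have hcop' : Nat.Coprime t (p ^ v) :=
        Nat.Coprime.pow_right v (Nat.coprime_comm.mp ((Nat.Prime.coprime_iff_not_dvd hpp).mpr hpt))
      exact hcop'.dvd_of_dvd_mul_left (by rw [hkm]; exact htk)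
    · rintro ⟨htm, -⟩
      refine ⟨⟨htm.trans (Nat.ordCompl_dvd k p), hk0⟩, fun hptt => hpm (hptt.trans htm)⟩
  -- complementary sum
  have hcompl : ∑ t ∈ m.divisors, (μ t : ℝ) * ((k / t : ℕ) : ℝ)
      = (p : ℝ) ^ v * (Nat.totient m : ℝ) := by
    rw [← moebius_div_sum m hm0, Finset.mul_sum]
    refine Finset.sum_congr rfl fun t ht => ?_
    obtain ⟨htm, -⟩ := Nat.mem_divisors.mp ht
    have : k / t = p ^ v * (m / t) := by
      rw [← hkm, Nat.mul_div_assoc _ htm]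
    rw [this]
    push_cast [Nat.mul_div_assoc]
    ring
  have hsplit : ∑ t ∈ k.divisors, (if p ∣ t then (μ t : ℝ) * ((k / t : ℕ) : ℝ) else 0)
      = ∑ t ∈ k.divisors, (μ t : ℝ) * ((k / t : ℕ) : ℝ)
        - ∑ t ∈ m.divisors, (μ t : ℝ) * ((k / t : ℕ) : ℝ) := by
    rw [← hsets, Finset.sum_filter]
    rw [← Finset.sum_sub_distrib]
    refine Finset.sum_congr rfl fun t ht => ?_
    by_cases h : p ∣ t <;> simp [h]
  rw [hsplit, moebius_div_sum k hk, hcompl]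
  -- now pure real arithmetic
  have hp2 : (2 : ℕ) ≤ p := hpp.two_le
  have hP1 : (p : ℝ) - 1 ≠ 0 := by
    have : (2 : ℝ) ≤ (p : ℝ) := by exact_mod_cast hp2
    linarith
  have htotR : (Nat.totient k : ℝ) = (p : ℝ) ^ (v - 1) * ((p : ℝ) - 1) * (Nat.totient m : ℝ) := by
    rw [htot]
    push_cast [Nat.cast_sub (by omega : 1 ≤ p)]
    ring
  have hpow : (p : ℝ) ^ v = (p : ℝ) * (p : ℝ) ^ (v - 1) := by
    rw [← pow_succ']
    congr 1
    omega
  rw [htotR, hpow]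
  field_simp
  ring
lemma keySum (k : ℕ) (hk : 0 < k) :
    ∑ t ∈ k.divisors, (μ t : ℝ) * ((k / t : ℕ) : ℝ) * Real.log t
      = -(Nat.totient k : ℝ) * ∑ p ∈ k.primeFactors, Real.log p / ((p : ℝ) - 1) := by
  have step1 : ∀ t ∈ k.divisors, (μ t : ℝ) * ((k / t : ℕ) : ℝ) * Real.log t
      = ∑ p ∈ k.primeFactors, (if p ∣ t then (μ t : ℝ) * ((k / t : ℕ) : ℝ) * Real.log p else 0) := by
    intro t ht
    obtain ⟨htk, hk0⟩ := Nat.mem_divisors.mp ht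
    have ht0 : t ≠ 0 := fun h => hk0 (Nat.eq_zero_of_zero_dvd (h ▸ htk))
    by_cases hmu : μ t = 0
    · simp [hmu]
    · have hsq : Squarefree t := moebius_ne_zero_iff_squarefree.mp hmu
      have hlog : Real.log t = ∑ p ∈ t.primeFactors, Real.log p := by
        conv_lhs => rw [← Nat.prod_primeFactors_of_squarefree hsq]
        push_cast
        rw [Real.log_prod]
        intro p hp
        exact_mod_cast (Nat.prime_of_mem_primeFactors hp).ne_zero
      have hfilter : k.primeFactors.filter (· ∣ t) = t.primeFactors := by
        ext p
        simp only [Finset.mem_filter, Nat.mem_primeFactors]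
        constructor
        · rintro ⟨⟨h1, -, -⟩, h2⟩
          exact ⟨h1, h2, ht0⟩
        · rintro ⟨h1, h2, -⟩
          exact ⟨⟨h1, h2.trans htk, hk0⟩, h2⟩
      rw [hlog, Finset.mul_sum]
      rw [← Finset.sum_filter, hfilter]
  rw [Finset.sum_congr rfl step1, Finset.sum_comm]
  rw [Finset.mul_sum]
  refine Finset.sum_congr rfl fun p hp => ?_
  have : ∑ t ∈ k.divisors, (if p ∣ t then (μ t : ℝ) * ((k / t : ℕ) : ℝ) * Real.log p else 0)
      = (∑ t ∈ k.divisors, (if p ∣ t then (μ t : ℝ) * ((k / t : ℕ) : ℝ) else 0)) * Real.log p := by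
    rw [Finset.sum_mul]
    refine Finset.sum_congr rfl fun t ht => ?_
    by_cases h : p ∣ t <;> simp [h]
  rw [this, inner_sum_eq k p hk hp]
  ring
lemma realTotal (k : ℕ) (hk : 1 < k) :
    ∑ t ∈ k.divisors, (μ t : ℝ) * ((k / t : ℕ) : ℝ)
        * ((((t : ℝ) - 1) * Real.log (2 * Real.pi) - Real.log t) / 2)
      = (Nat.totient k : ℝ) * ((1 / 2 : ℝ) * ∑ p ∈ k.primeFactors, Real.log p / ((p : ℝ) - 1)
          - Real.log (2 * Real.pi) / 2) := by
  have hk0 : 0 < k := by omega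
  have expand : ∀ t ∈ k.divisors, (μ t : ℝ) * ((k / t : ℕ) : ℝ)
        * ((((t : ℝ) - 1) * Real.log (2 * Real.pi) - Real.log t) / 2)
      = Real.log (2 * Real.pi) / 2 * ((μ t : ℝ) * (k : ℝ) - (μ t : ℝ) * ((k / t : ℕ) : ℝ))
        - (1 / 2 : ℝ) * ((μ t : ℝ) * ((k / t : ℕ) : ℝ) * Real.log t) := by
    intro t ht
    obtain ⟨htk, -⟩ := Nat.mem_divisors.mp ht
    have hkt : ((k / t : ℕ) : ℝ) * (t : ℝ) = (k : ℝ) := by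
      rw [← Nat.cast_mul, Nat.div_mul_cancel htk]
    linear_combination ((μ t : ℝ) * Real.log (2 * Real.pi) / 2) * hkt
  rw [Finset.sum_congr rfl expand, Finset.sum_sub_distrib, ← Finset.mul_sum,
    Finset.sum_sub_distrib, ← Finset.sum_mul, moebius_sum_zero k hk, moebius_div_sum k hk0,
    ← Finset.mul_sum, keySum k hk0]
  ring

theorem logGamma_weighted_average_ramanujan_sum (k : ℕ) (hk : 1 < k) :
    (1 / (Nat.totient k : ℂ)) *
        ∑ j ∈ Finset.Icc 1 k, (Real.log (Real.Gamma ((j : ℝ) / (k : ℝ))) : ℂ) * ramanujanSum k j =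
      ((1 / 2 : ℝ) * ∑ p ∈ k.primeFactors, Real.log p / ((p : ℝ) - 1)
        - Real.log (2 * Real.pi) / 2 : ℝ) := by
  have hk0 : 0 < k := by omega
  have hstep : ∀ j ∈ Finset.Icc 1 k,
      (Real.log (Real.Gamma ((j : ℝ) / (k : ℝ))) : ℂ) * ramanujanSum k j
      = ∑ t ∈ k.divisors, (Real.log (Real.Gamma ((j : ℝ) / (k : ℝ))) : ℂ) *
          ((μ t : ℂ) * (if ((k / t : ℕ) : ℤ) ∣ (j : ℤ) then ((k / t : ℕ) : ℂ) else 0)) := by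
    intro j _
    rw [ramanujanSum_eq k hk0 j, Finset.mul_sum]
  rw [Finset.sum_congr rfl hstep, Finset.sum_comm]
  have hinner : ∀ t ∈ k.divisors,
      ∑ j ∈ Finset.Icc 1 k, (Real.log (Real.Gamma ((j : ℝ) / (k : ℝ))) : ℂ) *
          ((μ t : ℂ) * (if ((k / t : ℕ) : ℤ) ∣ (j : ℤ) then ((k / t : ℕ) : ℂ) else 0))
      = (μ t : ℂ) * ((k / t : ℕ) : ℂ)
          * (((((t : ℝ) - 1) * Real.log (2 * Real.pi) - Real.log t) / 2 : ℝ) : ℂ) := by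
    intro t ht
    obtain ⟨htk, hknz⟩ := Nat.mem_divisors.mp ht
    have ht0 : 0 < t := Nat.pos_of_mem_divisors ht
    set q := k / t with hq
    have hq0 : 0 < q := Nat.div_pos (Nat.le_of_dvd hk0 htk) ht0
    have hkq : k = q * t := by rw [hq, Nat.div_mul_cancel htk]
    have step1 : ∀ j ∈ Finset.Icc 1 k,
        (Real.log (Real.Gamma ((j : ℝ) / (k : ℝ))) : ℂ) *
          ((μ t : ℂ) * (if ((q : ℕ) : ℤ) ∣ (j : ℤ) then ((q : ℕ) : ℂ) else 0))
        = if q ∣ j then (Real.log (Real.Gamma ((j : ℝ) / (k : ℝ))) : ℂ) * ((μ t : ℂ) * (q : ℂ))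
          else 0 := by
      intro j _
      by_cases h : q ∣ j
      · rw [if_pos (Int.natCast_dvd_natCast.mpr h), if_pos h]
      · rw [if_neg (fun hc => h (Int.natCast_dvd_natCast.mp hc)), if_neg h]
        ring
    rw [Finset.sum_congr rfl step1, ← Finset.sum_filter]
    have step2 : ∑ j ∈ (Finset.Icc 1 k).filter (q ∣ ·),
        (Real.log (Real.Gamma ((j : ℝ) / (k : ℝ))) : ℂ) * ((μ t : ℂ) * (q : ℂ))
        = ∑ i ∈ Finset.Icc 1 t,
        (Real.log (Real.Gamma ((i : ℝ) / (t : ℝ))) : ℂ) * ((μ t : ℂ) * (q : ℂ)) := by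
      refine Finset.sum_nbij' (fun j => j / q) (fun i => q * i) ?_ ?_ ?_ ?_ ?_
      · intro a ha
        simp only [Finset.mem_filter, Finset.mem_Icc] at ha
        obtain ⟨⟨h1, h2⟩, hdv⟩ := ha
        simp only [Finset.mem_Icc]
        constructor
        · exact (Nat.one_le_div_iff hq0).mpr (Nat.le_of_dvd (by omega) hdv)
        · rw [hkq] at h2
          exact Nat.le_of_mul_le_mul_left (by rw [Nat.mul_div_cancel' hdv]; omega) hq0
      · intro i hi
        simp only [Finset.mem_Icc] at hi
        simp only [Finset.mem_filter, Finset.mem_Icc]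
        refine ⟨⟨Nat.one_le_iff_ne_zero.mpr (Nat.mul_ne_zero hq0.ne' (by omega)), ?_⟩,
          Dvd.intro i rfl⟩
        calc q * i ≤ q * t := Nat.mul_le_mul_left q hi.2
          _ = k := hkq.symm
      · intro a ha
        simp only [Finset.mem_filter] at ha
        exact Nat.mul_div_cancel' ha.2
      · intro i hi
        exact Nat.mul_div_cancel_left i hq0
      · intro a ha
        simp only [Finset.mem_filter, Finset.mem_Icc] at ha
        obtain ⟨⟨h1, h2⟩, hdv⟩ := ha
        have harg : (a : ℝ) / (k : ℝ) = ((a / q : ℕ) : ℝ) / (t : ℝ) := by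
          have ha' : (a : ℝ) = (q : ℝ) * ((a / q : ℕ) : ℝ) := by
            rw [← Nat.cast_mul, Nat.mul_div_cancel' hdv]
          have hk' : (k : ℝ) = (q : ℝ) * (t : ℝ) := by rw [hkq]; push_cast; ring
          rw [ha', hk']
          rw [mul_div_mul_left _ _ (by exact_mod_cast hq0.ne' : (q : ℝ) ≠ 0)]
        rw [harg]
    rw [step2, ← Finset.sum_mul, ← Complex.ofReal_sum, gammaSum t ht0]
    ring
  rw [Finset.sum_congr rfl hinner]
  have hcast : ∑ t ∈ k.divisors, (μ t : ℂ) * ((k / t : ℕ) : ℂ)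
        * (((((t : ℝ) - 1) * Real.log (2 * Real.pi) - Real.log t) / 2 : ℝ) : ℂ)
      = ((∑ t ∈ k.divisors, (μ t : ℝ) * ((k / t : ℕ) : ℝ)
        * ((((t : ℝ) - 1) * Real.log (2 * Real.pi) - Real.log t) / 2) : ℝ) : ℂ) := by
    rw [Complex.ofReal_sum]
    refine Finset.sum_congr rfl fun t _ => ?_
    push_cast
    ring
  rw [hcast, realTotal k hk, Complex.ofReal_mul]
  have hphi : ((Nat.totient k : ℝ) : ℂ) ≠ 0 := by
    rw [Complex.ofReal_ne_zero]
    exact_mod_cast (Nat.totient_pos.mpr hk0).ne'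
  rw [one_div, ← mul_assoc, show ((Nat.totient k : ℕ) : ℂ)⁻¹ * ((Nat.totient k : ℝ) : ℂ)
      = 1 by push_cast at hphi ⊢; field_simp, one_mul]
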